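/- (Two-row Pieri-type multiplicity-freeness.) If μ = (g, g) is a two-row rectangle and λ is a partition with at most two distinct part sizes (a rectangle or a fat hook), then for every partition ν, c^ν_{λ,(g,g)} ≤ 1. -/

import Mathlib

/-- `f` is a partition: weakly decreasing and eventually zero (0-indexed parts). -/
def IsPartition (f : ℕ → ℕ) : Prop :=
  (∀ i j, i ≤ j → f j ≤ f i) ∧ ∃ N, ∀ i, N ≤ i → f i = 0

/-- The partition `f` is contained in the `l × k` rectangle. -/
def InRect (f : ℕ → ℕ) (l k : ℕ) : Prop :=
  IsPartition f ∧ f 0 ≤ k ∧ ∀ i, l ≤ i → f i = 0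

/-- Number of nonzero parts of `f`. -/
noncomputable def numParts (f : ℕ → ℕ) : ℕ := {i | f i ≠ 0}.ncard

/-- Number of distinct nonzero part sizes of `f`. -/
noncomputable def numPartSizes (f : ℕ → ℕ) : ℕ := {n | n ≠ 0 ∧ ∃ i, f i = n}.ncard

/-- The cell `c = (i,j)` (0-indexed) lies in the skew shape `ν/λ`. -/
def InSkew (ν lam : ℕ → ℕ) (c : ℕ × ℕ) : Prop := lam c.1 ≤ c.2 ∧ c.2 < ν c.1

/-- `c'` strictly precedes `c` in the right-to-left, top-to-bottom reading order. -/
def ReadBefore (c' c : ℕ × ℕ) : Prop := c'.1 < c.1 ∨ (c'.1 = c.1 ∧ c.2 < c'.2)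

/-- `T` is a Littlewood–Richardson filling of the skew shape `ν/λ` with content `μ`:
a semistandard filling (positive entries, rows weakly increasing, columns strictly
increasing) whose entry `m+1` occurs `μ m` times, and whose right-to-left,
top-to-bottom reading word is a ballot sequence. -/
def IsLRFilling (lam mu ν : ℕ → ℕ) (T : ℕ × ℕ → ℕ) : Prop :=
  (∀ c, ¬ InSkew ν lam c → T c = 0) ∧
  (∀ c, InSkew ν lam c → 1 ≤ T c) ∧
  (∀ i j j', InSkew ν lam (i, j) → InSkew ν lam (i, j') → j ≤ j' →
      T (i, j) ≤ T (i, j')) ∧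
  (∀ i j, InSkew ν lam (i, j) → InSkew ν lam (i + 1, j) → T (i, j) < T (i + 1, j)) ∧
  (∀ m, {c | InSkew ν lam c ∧ T c = m + 1}.Finite ∧
      {c | InSkew ν lam c ∧ T c = m + 1}.ncard = mu m) ∧
  (∀ c, InSkew ν lam c → ∀ m, 1 ≤ m →
      {c' | InSkew ν lam c' ∧ (ReadBefore c' c ∨ c' = c) ∧ T c' = m + 1}.ncard ≤
      {c' | InSkew ν lam c' ∧ (ReadBefore c' c ∨ c' = c) ∧ T c' = m}.ncard)

/-- The Littlewood–Richardson coefficient `c^ν_{λ,μ}`. -/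
noncomputable def lrCoeff (lam mu ν : ℕ → ℕ) : ℕ :=
  Nat.card {T : ℕ × ℕ → ℕ // IsLRFilling lam mu ν T}

/-- Box `c = (i,j)` of the rectangle lies in `λ` placed at the top-left. -/
def InLam (lam : ℕ → ℕ) (c : ℕ × ℕ) : Prop := c.2 < lam c.1

/-- Box `c = (i,j)` of `l × k` lies in `rotate(μ)`, i.e. `μ` rotated 180° and
placed at the bottom-right. -/
def InRot (mu : ℕ → ℕ) (l k : ℕ) (c : ℕ × ℕ) : Prop := k - mu (l - 1 - c.1) ≤ c.2

/-- The placements of `λ` (top-left) and `rotate(μ)` (bottom-right) in `l × k`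
are disjoint. -/
def DisjointPlace (lam mu : ℕ → ℕ) (l k : ℕ) : Prop :=
  ∀ c : ℕ × ℕ, c.1 < l → c.2 < k → ¬ (InLam lam c ∧ InRot mu l k c)

/-- Column `j` of `l × k` is full for `λ ∪ rotate(μ)`. -/
def FullCol (lam mu : ℕ → ℕ) (l k j : ℕ) : Prop :=
  ∀ i, i < l → (InLam lam (i, j) ∨ InRot mu l k (i, j))

/-- Row `i` of `l × k` is full for `λ ∪ rotate(μ)`. -/
def FullRow (lam mu : ℕ → ℕ) (l k i : ℕ) : Prop :=
  ∀ j, j < k → (InLam lam (i, j) ∨ InRot mu l k (i, j))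

/-- `(λ, μ, l × k)` is a basic Richardson quadruple. -/
def BasicRQ (lam mu : ℕ → ℕ) (l k : ℕ) : Prop :=
  InRect lam l k ∧ InRect mu l k ∧ DisjointPlace lam mu l k ∧
  (∀ j, j < k → ¬ FullCol lam mu l k j) ∧ (∀ i, i < l → ¬ FullRow lam mu l k i)

/-- The rectangle partition `(g^h)`. -/
def rectP (g h : ℕ) : ℕ → ℕ := fun i => if i < h then g else 0

/-- The hook partition `(b, 1^a)`. -/
def hookP (b a : ℕ) : ℕ → ℕ := fun i => if i = 0 then b else if i ≤ a then 1 else 0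

namespace Stmt16Aux

lemma upclosed_eq_Ico (S : Finset ℕ) (a b : ℕ) (hsub : S ⊆ Finset.Ico a b)
    (hup : ∀ j ∈ S, ∀ j', j ≤ j' → j' < b → j' ∈ S) :
    S = Finset.Ico (b - S.card) b := by
  rcases S.eq_empty_or_nonempty with h | h
  · simp [h]
  · set m := S.min' h with hm
    have hmS : m ∈ S := S.min'_mem h
    have hmb : m < b := (Finset.mem_Ico.mp (hsub hmS)).2
    have hSeq : S = Finset.Ico m b := by
      ext j
      simp only [Finset.mem_Ico]
      constructor
      · intro hj
        exact ⟨S.min'_le j hj, (Finset.mem_Ico.mp (hsub hj)).2⟩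
      · rintro ⟨h1, h2⟩
        exact hup m hmS j h1 h2
    have hcard : S.card = b - m := by rw [hSeq, Nat.card_Ico]
    rw [hcard, Nat.sub_sub_self hmb.le, hSeq]

section Extract

variable (lam ν : ℕ → ℕ) (T : ℕ × ℕ → ℕ)

/-- columns of row `i` carrying entry 2 -/
def twoF (i : ℕ) : Finset ℕ := (Finset.Ico (lam i) (ν i)).filter fun j => T (i, j) = 2

/-- columns of row `i` carrying entry 1 -/
def oneF (i : ℕ) : Finset ℕ := (Finset.Ico (lam i) (ν i)).filter fun j => T (i, j) = 1

/-- number of 2s in row `i` -/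
def tF (i : ℕ) : ℕ := (twoF lam ν T i).card

/-- number of 1s in row `i` -/
def uF (i : ℕ) : ℕ := (oneF lam ν T i).card

variable {lam ν T}

lemma mem_twoF {i j : ℕ} :
    j ∈ twoF lam ν T i ↔ lam i ≤ j ∧ j < ν i ∧ T (i, j) = 2 := by
  simp [twoF, Finset.mem_filter, Finset.mem_Ico, and_assoc]

lemma mem_oneF {i j : ℕ} :
    j ∈ oneF lam ν T i ↔ lam i ≤ j ∧ j < ν i ∧ T (i, j) = 1 := by
  simp [oneF, Finset.mem_filter, Finset.mem_Ico, and_assoc]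

variable {g : ℕ}

lemma T_le_two (hT : IsLRFilling lam (rectP g 2) ν T) {c : ℕ × ℕ}
    (hc : InSkew ν lam c) : T c ≤ 2 := by
  by_contra h
  push_neg at h
  obtain ⟨-, -, -, -, hcontent, -⟩ := hT
  obtain ⟨hfin, hcard⟩ := hcontent (T c - 1)
  have hmu : rectP g 2 (T c - 1) = 0 := by unfold rectP; rw [if_neg]; omega
  have hempty : {c' | InSkew ν lam c' ∧ T c' = (T c - 1) + 1} = ∅ :=
    (Set.ncard_eq_zero hfin).mp (by rw [hcard, hmu])
  have hmem : c ∈ {c' | InSkew ν lam c' ∧ T c' = (T c - 1) + 1} := ⟨hc, by omega⟩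
  rw [hempty] at hmem
  exact hmem

lemma T_one_or_two (hT : IsLRFilling lam (rectP g 2) ν T) {c : ℕ × ℕ}
    (hc : InSkew ν lam c) : T c = 1 ∨ T c = 2 := by
  have h1 := hT.2.1 c hc
  have h2 := T_le_two hT hc
  omega

lemma t_add_u (hT : IsLRFilling lam (rectP g 2) ν T) (i : ℕ) :
    tF lam ν T i + uF lam ν T i = ν i - lam i := by
  have key := Finset.card_filter_add_card_filter_not
    (s := Finset.Ico (lam i) (ν i)) (p := fun j => T (i, j) = 2)
  have heq : (Finset.Ico (lam i) (ν i)).filter (fun j => ¬ T (i, j) = 2)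
      = oneF lam ν T i := by
    apply Finset.filter_congr
    intro j hj
    rw [Finset.mem_Ico] at hj
    have h12 := T_one_or_two hT (c := (i, j)) ⟨hj.1, hj.2⟩
    constructor <;> intro h' <;> omega
  rw [heq, Nat.card_Ico] at key
  exact key

lemma twoF_eq_Ico (hT : IsLRFilling lam (rectP g 2) ν T) (i : ℕ) :
    twoF lam ν T i = Finset.Ico (ν i - tF lam ν T i) (ν i) := by
  apply upclosed_eq_Ico _ (lam i)
  · intro j hj
    rw [mem_twoF] at hj
    exact Finset.mem_Ico.mpr ⟨hj.1, hj.2.1⟩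
  · intro j hj j' hle hlt
    rw [mem_twoF] at hj ⊢
    have hs : InSkew ν lam (i, j) := ⟨hj.1, hj.2.1⟩
    have hs' : InSkew ν lam (i, j') := ⟨le_trans hj.1 hle, hlt⟩
    have hmono := hT.2.2.1 i j j' hs hs' hle
    have hle2 := T_le_two hT hs'
    refine ⟨hs'.1, hlt, ?_⟩
    have := hj.2.2
    omega

lemma t_le (hlam : IsPartition lam) (hT : IsLRFilling lam (rectP g 2) ν T) (i : ℕ) :
    tF lam ν T i ≤ ν i - ν (i + 1) := by
  have hsub : twoF lam ν T i ⊆ Finset.Ico (ν (i + 1)) (ν i) := by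
    intro j hj
    rw [mem_twoF] at hj
    refine Finset.mem_Ico.mpr ⟨?_, hj.2.1⟩
    by_contra h
    push_neg at h
    have hs : InSkew ν lam (i, j) := ⟨hj.1, hj.2.1⟩
    have hs' : InSkew ν lam (i + 1, j) :=
      ⟨le_trans (hlam.1 i (i + 1) (by omega)) hj.1, h⟩
    have hcol := hT.2.2.2.1 i j hs hs'
    have hle2 := T_le_two hT hs'
    have := hj.2.2
    omega
  calc tF lam ν T i ≤ (Finset.Ico (ν (i + 1)) (ν i)).card := Finset.card_le_card hsub
    _ = ν i - ν (i + 1) := Nat.card_Ico _ _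

lemma u_le (hν : IsPartition ν) (hT : IsLRFilling lam (rectP g 2) ν T) (i : ℕ) :
    uF lam ν T (i + 1) ≤ lam i - lam (i + 1) := by
  have hsub : oneF lam ν T (i + 1) ⊆ Finset.Ico (lam (i + 1)) (lam i) := by
    intro j hj
    rw [mem_oneF] at hj
    refine Finset.mem_Ico.mpr ⟨hj.1, ?_⟩
    by_contra h
    push_neg at h
    have hs' : InSkew ν lam (i + 1, j) := ⟨hj.1, hj.2.1⟩
    have hs : InSkew ν lam (i, j) :=
      ⟨h, lt_of_lt_of_le hj.2.1 (hν.1 i (i + 1) (by omega))⟩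
    have hcol := hT.2.2.2.1 i j hs hs'
    have hpos := hT.2.1 (i, j) hs
    have := hj.2.2
    omega
  calc uF lam ν T (i + 1) ≤ (Finset.Ico (lam (i + 1)) (lam i)).card :=
        Finset.card_le_card hsub
    _ = lam i - lam (i + 1) := Nat.card_Ico _ _

/-- rows `< N`, cells from `F` rowwise, as a finset of cells -/
def pairF (F : ℕ → Finset ℕ) (N : ℕ) : Finset (ℕ × ℕ) :=
  (Finset.range N).biUnion fun i => (F i).image fun j => (i, j)

lemma mem_pairF {F : ℕ → Finset ℕ} {N : ℕ} {c : ℕ × ℕ} :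
    c ∈ pairF F N ↔ c.1 < N ∧ c.2 ∈ F c.1 := by
  obtain ⟨i, j⟩ := c
  simp only [pairF, Finset.mem_biUnion, Finset.mem_range, Finset.mem_image]
  constructor
  · rintro ⟨a, ha, b, hb, heq⟩
    cases heq
    exact ⟨ha, hb⟩
  · rintro ⟨h1, h2⟩
    exact ⟨i, h1, j, h2, rfl⟩

lemma card_pairF (F : ℕ → Finset ℕ) (N : ℕ) :
    (pairF F N).card = ∑ i ∈ Finset.range N, (F i).card := by
  rw [pairF, Finset.card_biUnion]
  · exact Finset.sum_congr rfl fun i _ =>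
      Finset.card_image_of_injective _ (fun a b h => congrArg Prod.snd h)
  · intro x hx y hy hxy
    simp only [Finset.disjoint_left, Finset.mem_image]
    rintro a ⟨b, hb, rfl⟩ ⟨b', hb', heq⟩
    exact hxy (congrArg Prod.fst heq).symm

lemma sum_t (hT : IsLRFilling lam (rectP g 2) ν T) (N : ℕ)
    (hN : ∀ i, N ≤ i → ν i = 0) :
    ∑ i ∈ Finset.range N, tF lam ν T i = g := by
  have hset : {c | InSkew ν lam c ∧ T c = 1 + 1} = ↑(pairF (twoF lam ν T) N) := by
    ext ⟨i, j⟩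
    simp only [Set.mem_setOf_eq, Finset.mem_coe, mem_pairF, mem_twoF]
    constructor
    · rintro ⟨⟨h1, h2⟩, h3⟩
      have hiN : i < N := by
        by_contra h
        push_neg at h
        rw [hN i h] at h2
        omega
      exact ⟨hiN, h1, h2, by omega⟩
    · rintro ⟨-, h1, h2, h3⟩
      exact ⟨⟨h1, h2⟩, by omega⟩
  have hc := (hT.2.2.2.2.1 1).2
  rw [hset, Set.ncard_coe_finset, card_pairF] at hc
  simp only [tF, uF]
  rw [hc]
  simp [rectP]

lemma sum_u (hT : IsLRFilling lam (rectP g 2) ν T) (N : ℕ)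
    (hN : ∀ i, N ≤ i → ν i = 0) :
    ∑ i ∈ Finset.range N, uF lam ν T i = g := by
  have hset : {c | InSkew ν lam c ∧ T c = 0 + 1} = ↑(pairF (oneF lam ν T) N) := by
    ext ⟨i, j⟩
    simp only [Set.mem_setOf_eq, Finset.mem_coe, mem_pairF, mem_oneF]
    constructor
    · rintro ⟨⟨h1, h2⟩, h3⟩
      have hiN : i < N := by
        by_contra h
        push_neg at h
        rw [hN i h] at h2
        omega
      exact ⟨hiN, h1, h2, by omega⟩
    · rintro ⟨-, h1, h2, h3⟩
      exact ⟨⟨h1, h2⟩, by omega⟩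
  have hc := (hT.2.2.2.2.1 0).2
  rw [hset, Set.ncard_coe_finset, card_pairF] at hc
  simp only [tF, uF]
  rw [hc]
  simp [rectP]

lemma ballot (hT : IsLRFilling lam (rectP g 2) ν T) (i0 : ℕ)
    (h1 : 1 ≤ tF lam ν T i0) :
    ∑ i ∈ Finset.range (i0 + 1), tF lam ν T i ≤ ∑ i ∈ Finset.range i0, uF lam ν T i := by
  have htle : tF lam ν T i0 ≤ ν i0 - lam i0 := by
    have := t_add_u hT i0; omega
  have hνpos : 1 ≤ ν i0 := by omega
  set j0 := ν i0 - tF lam ν T i0 with hj0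
  have hzmem : j0 ∈ twoF lam ν T i0 := by
    rw [twoF_eq_Ico hT]
    exact Finset.mem_Ico.mpr ⟨le_refl _, by omega⟩
  rw [mem_twoF] at hzmem
  have hzskew : InSkew ν lam (i0, j0) := ⟨hzmem.1, hzmem.2.1⟩
  have hb := hT.2.2.2.2.2 (i0, j0) hzskew 1 le_rfl
  have hset2 : {c' | InSkew ν lam c' ∧ (ReadBefore c' (i0, j0) ∨ c' = (i0, j0)) ∧ T c' = 1 + 1}
      = ↑(pairF (twoF lam ν T) (i0 + 1)) := by
    ext ⟨i, j⟩
    simp only [Set.mem_setOf_eq, Finset.mem_coe, mem_pairF, mem_twoF]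
    constructor
    · rintro ⟨hskew, hrb, hTc⟩
      have hiN : i < i0 + 1 := by
        rcases hrb with (h | h) | h
        · exact Nat.lt_succ_of_lt h
        · have : i = i0 := h.1
          omega
        · have : i = i0 := congrArg Prod.fst h
          omega
      exact ⟨hiN, hskew.1, hskew.2, by omega⟩
    · rintro ⟨hiN, hl, hr, hTc⟩
      refine ⟨⟨hl, hr⟩, ?_, by omega⟩
      by_cases hi : i < i0
      · exact Or.inl (Or.inl hi)
      · have hi0 : i = i0 := by omega
        subst hi0
        have hj' : j ∈ twoF lam ν T i := mem_twoF.mpr ⟨hl, hr, by omega⟩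
        rw [twoF_eq_Ico hT] at hj'
        have hge : ν i - tF lam ν T i ≤ j := (Finset.mem_Ico.mp hj').1
        rcases eq_or_lt_of_le hge with heq | hlt
        · exact Or.inr (by rw [← heq])
        · exact Or.inl (Or.inr ⟨rfl, hlt⟩)
  have hset1 : {c' | InSkew ν lam c' ∧ (ReadBefore c' (i0, j0) ∨ c' = (i0, j0)) ∧ T c' = 1}
      = ↑(pairF (oneF lam ν T) i0) := by
    ext ⟨i, j⟩
    simp only [Set.mem_setOf_eq, Finset.mem_coe, mem_pairF, mem_oneF]
    constructor
    · rintro ⟨hskew, hrb, hTc⟩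
      have hle : i ≤ i0 := by
        rcases hrb with (h | h) | h
        · omega
        · have : i = i0 := h.1; omega
        · have : i = i0 := congrArg Prod.fst h; omega
      have hi : i < i0 := by
        rcases eq_or_lt_of_le hle with heq | hlt
        · exfalso
          subst heq
          have hjge : j0 ≤ j := by
            rcases hrb with (h | h) | h
            · omega
            · exact le_of_lt h.2
            · have : j = j0 := congrArg Prod.snd h
              omega
          have hj' : j ∈ twoF lam ν T i := by
            rw [twoF_eq_Ico hT]
            exact Finset.mem_Ico.mpr ⟨by omega, hskew.2⟩
          rw [mem_twoF] at hj'
          omega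
        · exact hlt
      exact ⟨hi, hskew.1, hskew.2, hTc⟩
    · rintro ⟨hi, hl, hr, hTc⟩
      exact ⟨⟨hl, hr⟩, Or.inl (Or.inl hi), hTc⟩
  rw [hset2, hset1, Set.ncard_coe_finset, Set.ncard_coe_finset, card_pairF, card_pairF] at hb
  simp only [tF, uF]
  exact hb

lemma recon {T' : ℕ × ℕ → ℕ} (hT : IsLRFilling lam (rectP g 2) ν T)
    (hT' : IsLRFilling lam (rectP g 2) ν T')
    (htt : ∀ i, tF lam ν T i = tF lam ν T' i) : T = T' := by
  funext c
  by_cases hc : InSkew ν lam c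
  · obtain ⟨i, j⟩ := c
    have hm2 : T (i, j) = 2 ↔ T' (i, j) = 2 := by
      constructor
      · intro h
        have hj : j ∈ twoF lam ν T i := mem_twoF.mpr ⟨hc.1, hc.2, h⟩
        rw [twoF_eq_Ico hT] at hj
        have hj' : j ∈ twoF lam ν T' i := by
          rw [twoF_eq_Ico hT', ← htt]
          exact hj
        exact (mem_twoF.mp hj').2.2
      · intro h
        have hj : j ∈ twoF lam ν T' i := mem_twoF.mpr ⟨hc.1, hc.2, h⟩
        rw [twoF_eq_Ico hT', ← htt] at hj
        have hj' : j ∈ twoF lam ν T i := by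
          rw [twoF_eq_Ico hT]
          exact hj
        exact (mem_twoF.mp hj').2.2
    have h1 := T_one_or_two hT hc
    have h2 := T_one_or_two hT' hc
    rcases h1 with h1 | h1 <;> rcases h2 with h2 | h2 <;> omega
  · rw [hT.1 c hc, hT'.1 c hc]

end Extract

/-- abstract row data of an LR filling with content `(g,g)` :
`t i` = number of 2s in row `i`, `u i` = number of 1s in row `i`. -/
def SolT (g : ℕ) (lam ν t u : ℕ → ℕ) : Prop :=
  (∀ i, t i + u i = ν i - lam i) ∧
  (∀ i, u (i + 1) ≤ lam i - lam (i + 1)) ∧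
  (∀ i, t i ≤ ν i - ν (i + 1)) ∧
  (∀ N, (∀ i, N ≤ i → ν i = 0) →
    (∑ i ∈ Finset.range N, t i = g ∧ ∑ i ∈ Finset.range N, u i = g)) ∧
  (∀ i0, 1 ≤ t i0 →
    ∑ i ∈ Finset.range (i0 + 1), t i ≤ ∑ i ∈ Finset.range i0, u i)

lemma solT_of_filling {g : ℕ} {lam ν : ℕ → ℕ} {T : ℕ × ℕ → ℕ}
    (hlam : IsPartition lam) (hν : IsPartition ν)
    (hT : IsLRFilling lam (rectP g 2) ν T) :
    SolT g lam ν (tF lam ν T) (uF lam ν T) :=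
  ⟨t_add_u hT, u_le hν hT, t_le hlam hT,
    fun N hN => ⟨sum_t hT N hN, sum_u hT N hN⟩, ballot hT⟩

section Seq

variable {g : ℕ} {lam ν t u t' u' : ℕ → ℕ} {c e : ℕ}

lemma sum_range_split (f : ℕ → ℕ) {a b : ℕ} (hab : a ≤ b) :
    ∑ i ∈ Finset.range b, f i
      = ∑ i ∈ Finset.range a, f i + ∑ i ∈ Finset.Ico a b, f i := by
  rw [Finset.range_eq_Ico, Finset.range_eq_Ico]
  exact (Finset.sum_Ico_consecutive f (Nat.zero_le a) hab).symm

lemma sum_Ico_two (f : ℕ → ℕ) (e : ℕ) :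
    ∑ i ∈ Finset.Ico e (e + 2), f i = f e + f (e + 1) := by
  rw [show e + 2 = (e + 1) + 1 from rfl, Finset.sum_Ico_succ_top (by omega),
    Finset.sum_Ico_succ_top (by omega), Finset.Ico_self, Finset.sum_empty]
  omega

lemma sum_range_e2 (f : ℕ → ℕ) {K e : ℕ} (hK : K ≤ e) :
    ∑ i ∈ Finset.range (e + 2), f i
      = ∑ i ∈ Finset.range K, f i + ∑ i ∈ Finset.Ico K e, f i + f e + f (e + 1) := by
  rw [sum_range_split f (show K ≤ e + 2 by omega)]
  rw [show (∑ i ∈ Finset.Ico K (e + 2), f i)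
      = ∑ i ∈ Finset.Ico K e, f i + ∑ i ∈ Finset.Ico e (e + 2), f i from
    (Finset.sum_Ico_consecutive f hK (by omega)).symm]
  rw [sum_Ico_two]
  omega

lemma sol_t0 (hS : SolT g lam ν t u) : t 0 = 0 := by
  by_contra h
  have hb := hS.2.2.2.2 0 (by omega)
  rw [Finset.sum_range_one, Finset.sum_range_zero] at hb
  omega

lemma sol_u_forced (hce : c ≤ e)
    (hblock1 : ∀ i, i < c → lam i = lam 0)
    (hblock2 : ∀ i, c ≤ i → i < e → lam i = lam c)
    (hblock3 : ∀ i, e ≤ i → lam i = 0)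
    (hS : SolT g lam ν t u) :
    ∀ i, 1 ≤ i → i ≠ c → i ≠ e → u i = 0 := by
  intro i h1 h2 h3
  obtain ⟨j, rfl⟩ : ∃ j, i = j + 1 := ⟨i - 1, by omega⟩
  have h2' := hS.2.1 j
  have heq : lam j = lam (j + 1) := by
    rcases lt_or_ge (j + 1) c with h | h
    · rw [hblock1 j (by omega), hblock1 (j + 1) h]
    · rcases lt_or_ge (j + 1) e with h' | h'
      · rw [hblock2 j (by omega) (by omega), hblock2 (j + 1) (by omega) h']
      · rw [hblock3 j (by omega), hblock3 (j + 1) (by omega)]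
  omega

lemma sol_nu_tail (hν : IsPartition ν) (hce : c ≤ e)
    (hblock1 : ∀ i, i < c → lam i = lam 0)
    (hblock2 : ∀ i, c ≤ i → i < e → lam i = lam c)
    (hblock3 : ∀ i, e ≤ i → lam i = 0)
    (hS : SolT g lam ν t u) :
    ∀ i, e + 2 ≤ i → ν i = 0 := by
  have hu1 : u (e + 1) = 0 :=
    sol_u_forced hce hblock1 hblock2 hblock3 hS (e + 1) (by omega) (by omega) (by omega)
  have h1 := hS.1 (e + 1)
  have h3 := hS.2.2.1 (e + 1)
  rw [show e + 1 + 1 = e + 2 by omega] at h3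
  have hl1 : lam (e + 1) = 0 := hblock3 (e + 1) (by omega)
  have hmono := hν.1 (e + 1) (e + 2) (by omega)
  have h0 : ν (e + 2) = 0 := by omega
  intro i hi
  have := hν.1 (e + 2) i hi
  omega

lemma sol_pin (hν : IsPartition ν) (hce : c ≤ e)
    (hblock1 : ∀ i, i < c → lam i = lam 0)
    (hblock2 : ∀ i, c ≤ i → i < e → lam i = lam c)
    (hblock3 : ∀ i, e ≤ i → lam i = 0)
    (hS : SolT g lam ν t u) (hte : 1 ≤ t e) :
    ν e ≤ t e + ν (e + 1) := by
  have hNe2 := sol_nu_tail hν hce hblock1 hblock2 hblock3 hS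
  obtain ⟨hT2, hU2⟩ := hS.2.2.2.1 (e + 2) hNe2
  rw [Finset.sum_range_succ] at hT2 hU2
  rw [Finset.sum_range_succ] at hT2 hU2
  have h5 := hS.2.2.2.2 e hte
  rw [Finset.sum_range_succ] at h5
  have hue1 : u (e + 1) = 0 :=
    sol_u_forced hce hblock1 hblock2 hblock3 hS (e + 1) (by omega) (by omega) (by omega)
  have h1e1 := hS.1 (e + 1)
  have hl1 : lam (e + 1) = 0 := hblock3 (e + 1) (by omega)
  have h1e := hS.1 e
  have hle : lam e = 0 := hblock3 e le_rfl
  omega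

lemma sol_asym (hν : IsPartition ν) (hce : c < e)
    (hblock1 : ∀ i, i < c → lam i = lam 0)
    (hblock2 : ∀ i, c ≤ i → i < e → lam i = lam c)
    (hblock3 : ∀ i, e ≤ i → lam i = 0)
    (hS : SolT g lam ν t u) (hS' : SolT g lam ν t' u')
    (hlt : t' e < t e) : False := by
  have hu := sol_u_forced hce.le hblock1 hblock2 hblock3 hS
  have hu' := sol_u_forced hce.le hblock1 hblock2 hblock3 hS'
  have hNe2 := sol_nu_tail hν hce.le hblock1 hblock2 hblock3 hS
  have hte1 : 1 ≤ t e := by omega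
  have hpin := sol_pin hν hce.le hblock1 hblock2 hblock3 hS hte1
  have h3e := hS.2.2.1 e
  have hνe : ν (e + 1) < ν e := by omega
  have hte' : t' e = 0 := by
    by_contra h'
    have hpin' := sol_pin hν hce.le hblock1 hblock2 hblock3 hS' (by omega)
    omega
  -- common facts about t'
  have hte1' : t' (e + 1) = ν (e + 1) := by
    have h1e1 := hS'.1 (e + 1)
    have hl1 : lam (e + 1) = 0 := hblock3 (e + 1) (by omega)
    have := hu' (e + 1) (by omega) (by omega) (by omega)
    omega
  have hue' : u' e = ν e := by
    have h1e := hS'.1 e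
    have hle : lam e = 0 := hblock3 e le_rfl
    omega
  have hue1' : u' (e + 1) = 0 := hu' (e + 1) (by omega) (by omega) (by omega)
  obtain ⟨hT2, hU2⟩ := hS'.2.2.2.1 (e + 2) hNe2
  by_cases hcase : ∃ m, c < m ∧ m < e ∧ lam c < ν m
  · classical
    set P : ℕ → Prop := fun m => c < m ∧ lam c < ν m with hP
    obtain ⟨m0, hm1, hm2, hm3⟩ := hcase
    set M := Nat.findGreatest P (e - 1) with hM
    have hPM : P M := Nat.findGreatest_spec (m := m0) (by omega) ⟨hm1, hm3⟩
    have hMle : M ≤ e - 1 := Nat.findGreatest_le _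
    have hMc : c < M := hPM.1
    have hMlt : M < e := by omega
    have hmax : ∀ i, M < i → i < e → ν i ≤ lam c := by
      intro i hMi hie
      by_contra hcon
      push_neg at hcon
      exact (Nat.findGreatest_is_greatest hMi (by omega) : ¬ P i) ⟨by omega, hcon⟩
    have huM : u' M = 0 := hu' M (by omega) (by omega) (by omega)
    have h1M := hS'.1 M
    have hlM : lam M = lam c := hblock2 M (by omega) hMlt
    have htM : 1 ≤ t' M := by omega
    have h5 := hS'.2.2.2.2 M htM
    rw [sum_range_e2 t' (show M + 1 ≤ e by omega)] at hT2
    rw [sum_range_e2 u' (show M ≤ e by omega)] at hU2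
    have hmidT : ∑ i ∈ Finset.Ico (M + 1) e, t' i = 0 := by
      apply Finset.sum_eq_zero
      intro i hi
      rw [Finset.mem_Ico] at hi
      have hui : u' i = 0 := hu' i (by omega) (by omega) (by omega)
      have h1i := hS'.1 i
      have hli : lam i = lam c := hblock2 i (by omega) (by omega)
      have hνi : ν i ≤ lam c := hmax i (by omega) (by omega)
      omega
    have hmidU : ∑ i ∈ Finset.Ico M e, u' i = 0 := by
      apply Finset.sum_eq_zero
      intro i hi
      rw [Finset.mem_Ico] at hi
      exact hu' i (by omega) (by omega) (by omega)
    omega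
  · push_neg at hcase
    obtain ⟨hT2t, hU2t⟩ := hS.2.2.2.1 (e + 2) hNe2
    rw [sum_range_e2 t (show c + 1 ≤ e by omega), Finset.sum_range_succ] at hT2t
    rw [sum_range_e2 t' (show c + 1 ≤ e by omega), Finset.sum_range_succ] at hT2
    rw [sum_range_e2 u' (show c + 1 ≤ e by omega), Finset.sum_range_succ] at hU2
    have hmidT : ∑ i ∈ Finset.Ico (c + 1) e, t i = 0 := by
      apply Finset.sum_eq_zero
      intro i hi
      rw [Finset.mem_Ico] at hi
      have hui : u i = 0 := hu i (by omega) (by omega) (by omega)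
      have h1i := hS.1 i
      have hli : lam i = lam c := hblock2 i (by omega) (by omega)
      have hνi : ν i ≤ lam c := hcase i (by omega) (by omega)
      omega
    have hmidT' : ∑ i ∈ Finset.Ico (c + 1) e, t' i = 0 := by
      apply Finset.sum_eq_zero
      intro i hi
      rw [Finset.mem_Ico] at hi
      have hui : u' i = 0 := hu' i (by omega) (by omega) (by omega)
      have h1i := hS'.1 i
      have hli : lam i = lam c := hblock2 i (by omega) (by omega)
      have hνi : ν i ≤ lam c := hcase i (by omega) (by omega)
      omega
    have hmidU' : ∑ i ∈ Finset.Ico (c + 1) e, u' i = 0 := by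
      apply Finset.sum_eq_zero
      intro i hi
      rw [Finset.mem_Ico] at hi
      exact hu' i (by omega) (by omega) (by omega)
    have hte1t : t (e + 1) = ν (e + 1) := by
      have h1e1 := hS.1 (e + 1)
      have hl1 : lam (e + 1) = 0 := hblock3 (e + 1) (by omega)
      have := hu (e + 1) (by omega) (by omega) (by omega)
      omega
    have hsamelow : ∑ i ∈ Finset.range c, t i = ∑ i ∈ Finset.range c, t' i := by
      apply Finset.sum_congr rfl
      intro i hi
      rw [Finset.mem_range] at hi
      rcases Nat.eq_zero_or_pos i with rfl | hipos
      · rw [sol_t0 hS, sol_t0 hS']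
      · have h1i := hS.1 i
        have h1i' := hS'.1 i
        have := hu i hipos (by omega) (by omega)
        have := hu' i hipos (by omega) (by omega)
        omega
    have ht'c : 1 ≤ t' c := by omega
    rcases Nat.eq_zero_or_pos c with rfl | hcpos
    · have := sol_t0 hS'
      omega
    · have h5' := hS'.2.2.2.2 c ht'c
      rw [Finset.sum_range_succ] at h5'
      omega

theorem sol_unique (hν : IsPartition ν) (hce : c ≤ e)
    (hblock1 : ∀ i, i < c → lam i = lam 0)
    (hblock2 : ∀ i, c ≤ i → i < e → lam i = lam c)
    (hblock3 : ∀ i, e ≤ i → lam i = 0)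
    (hS : SolT g lam ν t u) (hS' : SolT g lam ν t' u') :
    ∀ i, t i = t' i := by
  have hu := sol_u_forced hce hblock1 hblock2 hblock3 hS
  have hu' := sol_u_forced hce hblock1 hblock2 hblock3 hS'
  have htee : c = e ∨ t e = t' e := by
    rcases eq_or_ne c e with h | h
    · exact Or.inl h
    · right
      by_contra hne
      rcases Nat.lt_or_ge (t e) (t' e) with h2 | h2
      · exact sol_asym hν (by omega) hblock1 hblock2 hblock3 hS' hS h2
      · exact sol_asym hν (by omega) hblock1 hblock2 hblock3 hS hS' (by omega)
  have hkey : ∀ i, i ≠ c → t i = t' i := by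
    intro i hic
    rcases Nat.eq_zero_or_pos i with rfl | hi
    · rw [sol_t0 hS, sol_t0 hS']
    · by_cases hie : i = e
      · rcases htee with h | h
        · exact absurd (hie.trans h.symm) hic
        · rw [hie]; exact h
      · have h1 := hS.1 i
        have h1' := hS'.1 i
        have := hu i hi hic hie
        have := hu' i hi hic hie
        omega
  intro i
  by_cases hic : i = c
  · have hNe2 := sol_nu_tail hν hce hblock1 hblock2 hblock3 hS
    obtain ⟨hT2, -⟩ := hS.2.2.2.1 (e + 2) hNe2
    obtain ⟨hT2', -⟩ := hS'.2.2.2.1 (e + 2) hNe2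
    have hcmem : c ∈ Finset.range (e + 2) := Finset.mem_range.mpr (by omega)
    rw [← Finset.sum_erase_add _ _ hcmem] at hT2 hT2'
    have hsame : ∑ j ∈ (Finset.range (e + 2)).erase c, t j
        = ∑ j ∈ (Finset.range (e + 2)).erase c, t' j :=
      Finset.sum_congr rfl (fun j hj => hkey j (Finset.ne_of_mem_erase hj))
    have hc : t c = t' c := by omega
    rw [hic]
    exact hc
  · exact hkey i hic

end Seq

lemma lam_structure {lam : ℕ → ℕ} (hlam : IsPartition lam) (hsize : numPartSizes lam ≤ 2) :
    ∃ c e, c ≤ e ∧ (∀ i, i < c → lam i = lam 0) ∧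
      (∀ i, c ≤ i → i < e → lam i = lam c) ∧ (∀ i, e ≤ i → lam i = 0) := by
  obtain ⟨hdec, N0, hN0⟩ := hlam
  have hN00 : lam N0 = 0 := hN0 N0 le_rfl
  by_cases h0 : lam 0 = 0
  · refine ⟨0, 0, le_rfl, fun i hi => by omega, fun i h1 h2 => by omega, fun i _ => ?_⟩
    have := hdec 0 i (Nat.zero_le _)
    omega
  · have hne : {i | lam i < lam 0}.Nonempty := ⟨N0, by simp only [Set.mem_setOf_eq]; omega⟩
    set c := sInf {i | lam i < lam 0} with hc
    have hcmem : lam c < lam 0 := Nat.sInf_mem hne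
    have hclow : ∀ i, i < c → lam i = lam 0 := by
      intro i hi
      have hnot : i ∉ {i | lam i < lam 0} := Nat.notMem_of_lt_sInf (hc ▸ hi)
      simp only [Set.mem_setOf_eq, not_lt] at hnot
      have := hdec 0 i (Nat.zero_le _)
      omega
    by_cases h1 : lam c = 0
    · refine ⟨c, c, le_rfl, hclow, fun i hi1 hi2 => by omega, fun i hi => ?_⟩
      have := hdec c i hi
      omega
    · have hne2 : {i | lam i < lam c}.Nonempty := ⟨N0, by simp only [Set.mem_setOf_eq]; omega⟩
      set e := sInf {i | lam i < lam c} with he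
      have hemem : lam e < lam c := Nat.sInf_mem hne2
      have hce : c ≤ e := by
        by_contra hlt
        push_neg at hlt
        have := hdec e c hlt.le
        omega
      have hmid : ∀ i, c ≤ i → i < e → lam i = lam c := by
        intro i hi1 hi2
        have hnot : i ∉ {i | lam i < lam c} := Nat.notMem_of_lt_sInf (he ▸ hi2)
        simp only [Set.mem_setOf_eq, not_lt] at hnot
        have := hdec c i hi1
        omega
      have he0 : lam e = 0 := by
        by_contra h2
        have hsub : ({lam 0, lam c, lam e} : Set ℕ) ⊆ {n | n ≠ 0 ∧ ∃ i, lam i = n} := by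
          rintro n hn
          rcases hn with rfl | rfl | rfl
          · exact ⟨h0, 0, rfl⟩
          · exact ⟨h1, c, rfl⟩
          · exact ⟨h2, e, rfl⟩
        have hfin : {n | n ≠ 0 ∧ ∃ i, lam i = n}.Finite := by
          apply Set.Finite.subset (Set.finite_Icc 1 (lam 0))
          rintro n ⟨hn, i, rfl⟩
          exact Set.mem_Icc.mpr ⟨by omega, hdec 0 i (Nat.zero_le _)⟩
        have h3 : ({lam 0, lam c, lam e} : Set ℕ).ncard = 3 :=
          Set.ncard_eq_three.mpr ⟨lam 0, lam c, lam e, by omega, by omega, by omega, rfl⟩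
        have hle := Set.ncard_le_ncard hsub hfin
        rw [h3] at hle
        rw [numPartSizes] at hsize
        omega
      refine ⟨c, e, hce, hclow, hmid, fun i hi => ?_⟩
      have := hdec e i hi
      omega

end Stmt16Aux

/-- If `μ = (g, g)` is a two-row rectangle and `λ` has at most two distinct part
sizes, then every LR coefficient `c^ν_{λ,μ}` is at most 1. -/
theorem stmt16 (g : ℕ) (lam : ℕ → ℕ)
    (hlam : IsPartition lam) (hsize : numPartSizes lam ≤ 2) :
    ∀ ν : ℕ → ℕ, IsPartition ν → lrCoeff lam (rectP g 2) ν ≤ 1 := by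
  intro ν hν
  have huniq : ∀ T T' : ℕ × ℕ → ℕ, IsLRFilling lam (rectP g 2) ν T →
      IsLRFilling lam (rectP g 2) ν T' → T = T' := by
    intro T T' hT hT'
    obtain ⟨c, e, hce, hb1, hb2, hb3⟩ := Stmt16Aux.lam_structure hlam hsize
    exact Stmt16Aux.recon hT hT'
      (Stmt16Aux.sol_unique hν hce hb1 hb2 hb3
        (Stmt16Aux.solT_of_filling hlam hν hT)
        (Stmt16Aux.solT_of_filling hlam hν hT'))
  rw [lrCoeff]
  rcases isEmpty_or_nonempty {T : ℕ × ℕ → ℕ // IsLRFilling lam (rectP g 2) ν T} with h | h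
  · rw [Nat.card_of_isEmpty]
    omega
  · obtain ⟨⟨T, hT⟩⟩ := h
    have hall : ∀ x : {T : ℕ × ℕ → ℕ // IsLRFilling lam (rectP g 2) ν T}, x = ⟨T, hT⟩ := by
      rintro ⟨T', hT'⟩
      exact Subtype.ext (huniq T' T hT' hT)
    haveI : Unique {T : ℕ × ℕ → ℕ // IsLRFilling lam (rectP g 2) ν T} := ⟨⟨⟨T, hT⟩⟩, hall⟩
    rw [Nat.card_unique]
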